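/- Let α > 1, x₀ ∈ ℝ, K₂ > 0, and let g(t) = K₂(t - x₀)^α for t ≥ x₀ and g(t) = 0 for t < x₀. Then there exists a constant K > 0 depending only on α and K₂ such that for all τ⁻ ≤ x₀ ≤ τ⁺, setting τ = (τ⁻+τ⁺)/2, one has ∫_{τ⁻}^{τ} ((τ⁻+τ)/2 - t) g(t) dt + ∫_{τ}^{τ⁺} (t - (τ+τ⁺)/2) g(t) dt ≥ K (τ⁺ - x₀)^{α+1} (τ⁺ - τ⁻). -/

import Mathlib

open intervalIntegral Real

-- x^(p+1) = x^p * x for 0 ≤ x, p+1 ≠ 0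
lemma rpow_succ_aux {x p : ℝ} (hx : 0 ≤ x) (hp : p + 1 ≠ 0) : x ^ (p + 1) = x ^ p * x := by
  rcases eq_or_lt_of_le hx with h | h
  · simp [← h, Real.zero_rpow hp]
  · rw [Real.rpow_add_one (ne_of_gt h)]

-- integral of f t * g t vanishes left of x₀
lemma int_zero_aux (α x₀ K₂ : ℝ) (hα : 1 < α) (g : ℝ → ℝ)
    (hg : ∀ t, g t = if x₀ ≤ t then K₂ * (t - x₀) ^ α else 0)
    {a b : ℝ} (ha : a ≤ x₀) (hb : b ≤ x₀) (f : ℝ → ℝ) :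
    ∫ t in a..b, f t * g t = 0 := by
  have : Set.EqOn (fun t => f t * g t) (fun _ => (0:ℝ)) (Set.uIcc a b) := by
    intro t ht
    have ht' : t ≤ x₀ := by
      rcases Set.mem_uIcc.mp ht with h | h
      · exact le_trans h.2 hb
      · exact le_trans h.2 ha
    have hgt : g t = 0 := by
      rw [hg t]
      split_ifs with h
      · have : t = x₀ := le_antisymm ht' h
        rw [this, sub_self, Real.zero_rpow (by positivity), mul_zero]
      · rfl
    simp [hgt]
  rw [intervalIntegral.integral_congr this, intervalIntegral.integral_const, smul_zero]

-- main computation: integral over [a,b] with x₀ ≤ a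
lemma int_comp_aux (α x₀ K₂ : ℝ) (hα : 1 < α) (g : ℝ → ℝ)
    (hg : ∀ t, g t = if x₀ ≤ t then K₂ * (t - x₀) ^ α else 0)
    {a b : ℝ} (ha : x₀ ≤ a) (hab : a ≤ b) (c : ℝ) :
    ∫ t in a..b, (t - c) * g t =
      K₂ * (((b - x₀) ^ (α + 2) - (a - x₀) ^ (α + 2)) / (α + 2)
        - (c - x₀) * (((b - x₀) ^ (α + 1) - (a - x₀) ^ (α + 1)) / (α + 1))) := by
  have h0 : (0:ℝ) < α := by linarith
  have step1 : Set.EqOn (fun t => (t - c) * g t)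
      (fun t => K₂ * (t - x₀) ^ (α + 1) - (K₂ * (c - x₀)) * (t - x₀) ^ α) (Set.uIcc a b) := by
    intro t ht
    have ht' : x₀ ≤ t := by
      rcases Set.mem_uIcc.mp ht with h | h
      · exact le_trans ha h.1
      · exact le_trans (le_trans ha hab) h.1
    have hgt : g t = K₂ * (t - x₀) ^ α := by rw [hg t, if_pos ht']
    have hs : (t - x₀) ^ (α + 1) = (t - x₀) ^ α * (t - x₀) :=
      rpow_succ_aux (by linarith) (by linarith)
    simp only [hgt, hs]
    ring
  rw [intervalIntegral.integral_congr step1]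
  have hc1 : Continuous fun t : ℝ => (t - x₀) ^ (α + 1) :=
    (Real.continuous_rpow_const (by linarith)).comp (continuous_sub_right x₀)
  have hc2 : Continuous fun t : ℝ => (t - x₀) ^ α :=
    (Real.continuous_rpow_const (by linarith)).comp (continuous_sub_right x₀)
  rw [intervalIntegral.integral_sub (f := fun t : ℝ => K₂ * (t - x₀) ^ (α + 1))
      (g := fun t : ℝ => K₂ * (c - x₀) * (t - x₀) ^ α)
      ((continuous_const.mul hc1 : Continuous fun t : ℝ => K₂ * (t - x₀) ^ (α + 1)).intervalIntegrable a b)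
      ((continuous_const.mul hc2 : Continuous fun t : ℝ => K₂ * (c - x₀) * (t - x₀) ^ α).intervalIntegrable a b),
    intervalIntegral.integral_const_mul, intervalIntegral.integral_const_mul]
  have e1 : (∫ t in a..b, (t - x₀) ^ (α + 1))
      = ((b - x₀) ^ (α + 2) - (a - x₀) ^ (α + 2)) / (α + 2) := by
    rw [show (fun t : ℝ => (t - x₀) ^ (α + 1)) = fun t : ℝ => (fun s : ℝ => s ^ (α+1)) (t - x₀) from rfl,
      intervalIntegral.integral_comp_sub_right (fun s : ℝ => s ^ (α+1)) x₀,
      integral_rpow (Or.inl (by linarith)), show α + 1 + 1 = α + 2 by ring]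
  have e2 : (∫ t in a..b, (t - x₀) ^ α)
      = ((b - x₀) ^ (α + 1) - (a - x₀) ^ (α + 1)) / (α + 1) := by
    rw [show (fun t : ℝ => (t - x₀) ^ α) = fun t : ℝ => (fun s : ℝ => s ^ α) (t - x₀) from rfl,
      intervalIntegral.integral_comp_sub_right (fun s : ℝ => s ^ α) x₀,
      integral_rpow (Or.inl (by linarith))]
  rw [e1, e2]
  ring

lemma cont_g_aux (α x₀ K₂ : ℝ) (hα : 1 < α) (g : ℝ → ℝ)
    (hg : ∀ t, g t = if x₀ ≤ t then K₂ * (t - x₀) ^ α else 0) : Continuous g := by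
  have : g = fun t => if x₀ ≤ t then K₂ * (t - x₀) ^ α else 0 := funext hg
  rw [this]
  apply Continuous.if_le
  · exact continuous_const.mul ((Real.continuous_rpow_const (by linarith)).comp (continuous_sub_right x₀))
  · exact continuous_const
  · exact continuous_const
  · exact continuous_id
  · intro t ht
    rw [← ht, sub_self, Real.zero_rpow (by positivity), mul_zero]

lemma scalarA_aux (α d m : ℝ) (hα : 1 < α) (hd : 0 ≤ d) (hdm : d ≤ m) :
    0 ≤ d * (7*α - 15) + m * (7*α + 17) := by
  nlinarith [mul_nonneg (sub_nonneg.2 hdm) (by linarith : (0:ℝ) ≤ 7*α + 17)]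

lemma scalarB_aux (α d m μ L : ℝ) (hα : 1 < α) (hd : 0 ≤ d) (hm : 0 ≤ m)
    (hL1 : 0.69 < L) (hL2 : L < 0.7) (hμ0 : 0 < μ)
    (hμ1 : 8*(1+(α-1)*L) ≤ μ) (hμ2 : μ*(1-(α-1)*L) ≤ 8) :
    0 ≤ d * (μ*(7*α-15) + 64) + m * (μ*(7*α+17) - 64*(α+2)) := by
  have hCd : 0 ≤ μ*(7*α-15) + 64 := by
    nlinarith [mul_nonneg hμ0.le (mul_nonneg (by linarith : (0:ℝ) ≤ α - 1) (by linarith : (0:ℝ) ≤ 7 - 8*L))]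
  have hCm : 0 ≤ μ*(7*α+17) - 64*(α+2) := by
    nlinarith [mul_le_mul_of_nonneg_right hμ1 (by linarith : (0:ℝ) ≤ 7*α + 17),
      mul_nonneg (by linarith : (0:ℝ) ≤ α - 1) (by linarith : (0:ℝ) ≤ 24*L - 1),
      mul_nonneg (mul_nonneg (by linarith : (0:ℝ) ≤ α - 1) (by linarith : (0:ℝ) ≤ α - 1)) (by linarith : (0:ℝ) ≤ L)]
  exact add_nonneg (mul_nonneg hd hCd) (mul_nonneg hm hCm)

lemma two_rpow_eq_aux (α : ℝ) : (2:ℝ)^(α+2) = 8 * Real.exp (Real.log 2 * (α-1)) := by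
  rw [show α + 2 = (α-1) + 3 by ring, Real.rpow_add (by norm_num : (0:ℝ) < 2),
    Real.rpow_def_of_pos (by norm_num : (0:ℝ) < 2) (α-1),
    show (3:ℝ) = ((3:ℕ):ℝ) by norm_num, Real.rpow_natCast]
  norm_num
  ring

lemma mu1_aux (α : ℝ) : 8*(1+(α-1)*Real.log 2) ≤ (2:ℝ)^(α+2) := by
  rw [two_rpow_eq_aux]
  have h := Real.add_one_le_exp (Real.log 2 * (α-1))
  nlinarith [h]

lemma mu2_aux (α : ℝ) : (2:ℝ)^(α+2)*(1-(α-1)*Real.log 2) ≤ 8 := by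
  rw [two_rpow_eq_aux]
  set s := Real.log 2 * (α-1) with hs
  have h := Real.add_one_le_exp (-s)
  have hmul : Real.exp (-s) * Real.exp s = 1 := by rw [← Real.exp_add]; simp
  have hp : (0:ℝ) < Real.exp s := Real.exp_pos s
  nlinarith [mul_le_mul_of_nonneg_right h hp.le]

lemma bern_aux (α d T P Q μ : ℝ) (hα : 1 < α) (hdpos : 0 < d) (hT : 0 ≤ T) (h2T : 2*T ≤ d)
    (hP : P = d^(α+1)) (hQ : Q = T^(α+1)) (hμ : μ = (2:ℝ)^(α+2)) :
    d*P + (α+2)*(2*T*P - d*P) ≤ μ*(T*Q) := by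
  have hs : -1 ≤ 2*T/d - 1 := by
    have : 0 ≤ 2*T/d := by positivity
    linarith
  have key := one_add_mul_self_le_rpow_one_add hs (by linarith : (1:ℝ) ≤ α+2)
  rw [show 1 + (2*T/d - 1) = 2*T/d by ring] at key
  have h1 : (2*T/d)^(α+2) = μ*(T*Q)/(d*P) := by
    rw [Real.div_rpow (by linarith) hdpos.le, Real.mul_rpow (by norm_num) hT, hμ, hP, hQ,
      show α+2 = (α+1)+1 by ring, rpow_succ_aux hT (by linarith), rpow_succ_aux hdpos.le (by linarith)]
    ring
  rw [h1] at key
  have hdP : 0 < d*P := by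
    rw [hP]; exact mul_pos hdpos (Real.rpow_pos_of_pos hdpos _)
  rw [le_div_iff₀ hdP] at key
  calc d*P + (α+2)*(2*T*P - d*P) = (1 + (α+2)*(2*T/d-1))*(d*P) := by field_simp
    _ ≤ μ*(T*Q) := key

lemma finalA_aux (α K₂ τm τp x₀ P : ℝ) (hα : 1 < α) (hK₂ : 0 < K₂) (hP : 0 ≤ P)
    (hm : τm ≤ x₀) (hcase : (τm + τp)/2 ≤ x₀) (hp : x₀ ≤ τp) :
    K₂ * (α - 1) / (32 * (α + 1) * (α + 2)) * P * (τp - τm) ≤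
      0 + (0 + K₂ * ((P * (τp - x₀) - 0) / (α + 2)
        - (((τm + τp) / 2 + τp) / 2 - x₀) * ((P - 0) / (α + 1)))) := by
  have h1 : (0:ℝ) < α + 1 := by linarith
  have h2 : (0:ℝ) < α + 2 := by linarith
  rw [← sub_nonneg]
  have hid : 0 + (0 + K₂ * ((P * (τp - x₀) - 0) / (α + 2)
        - (((τm + τp) / 2 + τp) / 2 - x₀) * ((P - 0) / (α + 1))))
      - K₂ * (α - 1) / (32 * (α + 1) * (α + 2)) * P * (τp - τm)
      = K₂ * P * ((τp - x₀) * (7*α - 15) + (x₀ - τm) * (7*α + 17)) / (32 * (α + 1) * (α + 2)) := by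
    field_simp
    ring
  rw [hid]
  apply div_nonneg
  · exact mul_nonneg (mul_nonneg hK₂.le hP)
      (scalarA_aux α (τp - x₀) (x₀ - τm) hα (by linarith) (by linarith))
  · nlinarith

lemma finalB_aux (α K₂ τm τp x₀ P Q μ : ℝ) (hα : 1 < α) (hK₂ : 0 < K₂)
    (hP : 0 ≤ P) (hμ0 : 0 < μ)
    (hμ1 : 8*(1+(α-1)*Real.log 2) ≤ μ) (hμ2 : μ*(1-(α-1)*Real.log 2) ≤ 8)
    (hbern : (τp - x₀)*P + (α+2)*(2*((τm + τp)/2 - x₀)*P - (τp - x₀)*P)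
      ≤ μ*(((τm + τp)/2 - x₀)*Q))
    (hm : τm ≤ x₀) (hp : x₀ ≤ τp) :
    K₂ * (α - 1) / (32 * (α + 1) * (α + 2)) * P * (τp - τm) ≤
      (0 + -(K₂ * ((Q * ((τm + τp)/2 - x₀) - 0) / (α + 2)
          - ((τm + (τm + τp)/2)/2 - x₀) * ((Q - 0) / (α + 1)))))
      + K₂ * ((P * (τp - x₀) - Q * ((τm + τp)/2 - x₀)) / (α + 2)
          - (((τm + τp)/2 + τp)/2 - x₀) * ((P - Q) / (α + 1))) := by
  have h1 : (0:ℝ) < α + 1 := by linarith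
  have h2 : (0:ℝ) < α + 2 := by linarith
  have hL1 : (0.69:ℝ) < Real.log 2 := by
    have := Real.log_two_gt_d9; linarith
  have hL2 : Real.log 2 < 0.7 := by
    have := Real.log_two_lt_d9; linarith
  have hW : 0 ≤ (τp - x₀) * (μ*(7*α-15) + 64) + (x₀ - τm) * (μ*(7*α+17) - 64*(α+2)) :=
    scalarB_aux α (τp - x₀) (x₀ - τm) μ (Real.log 2) hα (by linarith) (by linarith)
      hL1 hL2 hμ0 hμ1 hμ2
  have hS1 : 0 ≤ μ*(((τm + τp)/2 - x₀)*Q)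
      - ((τp - x₀)*P + (α+2)*(2*((τm + τp)/2 - x₀)*P - (τp - x₀)*P)) := by linarith
  rw [← sub_nonneg]
  have hid : (0 + -(K₂ * ((Q * ((τm + τp)/2 - x₀) - 0) / (α + 2)
          - ((τm + (τm + τp)/2)/2 - x₀) * ((Q - 0) / (α + 1)))))
      + K₂ * ((P * (τp - x₀) - Q * ((τm + τp)/2 - x₀)) / (α + 2)
          - (((τm + τp)/2 + τp)/2 - x₀) * ((P - Q) / (α + 1)))
      - K₂ * (α - 1) / (32 * (α + 1) * (α + 2)) * P * (τp - τm)
      = K₂ * (64 * (μ*(((τm + τp)/2 - x₀)*Q)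
          - ((τp - x₀)*P + (α+2)*(2*((τm + τp)/2 - x₀)*P - (τp - x₀)*P)))
        + P * ((τp - x₀) * (μ*(7*α-15) + 64) + (x₀ - τm) * (μ*(7*α+17) - 64*(α+2))))
        / (32 * (α + 1) * (α + 2) * μ) := by
    field_simp
    ring
  rw [hid]
  apply div_nonneg
  · exact mul_nonneg hK₂.le (add_nonneg (by linarith) (mul_nonneg hP hW))
  · nlinarith

theorem stmt_4 (α x₀ K₂ : ℝ) (hα : 1 < α) (hK₂ : 0 < K₂)
    (g : ℝ → ℝ) (hg : ∀ t, g t = if x₀ ≤ t then K₂ * (t - x₀) ^ α else 0) :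
    ∃ K : ℝ, 0 < K ∧ ∀ τm τp : ℝ, τm ≤ x₀ → x₀ ≤ τp →
      K * (τp - x₀) ^ (α + 1) * (τp - τm) ≤
        (∫ t in τm..((τm + τp) / 2), ((τm + (τm + τp) / 2) / 2 - t) * g t) +
          (∫ t in ((τm + τp) / 2)..τp, (t - ((τm + τp) / 2 + τp) / 2) * g t) := by
  have h1 : (0:ℝ) < α + 1 := by linarith
  have h2 : (0:ℝ) < α + 2 := by linarith
  refine ⟨K₂ * (α - 1) / (32 * (α + 1) * (α + 2)),
    div_pos (mul_pos hK₂ (by linarith)) (by nlinarith), ?_⟩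
  intro τm τp hm hp
  have hgc := cont_g_aux α x₀ K₂ hα g hg
  have hInt : ∀ c a b : ℝ, IntervalIntegrable (fun t => (t - c) * g t) MeasureTheory.volume a b :=
    fun c a b => ((continuous_id.sub continuous_const).mul hgc).intervalIntegrable a b
  have hD2 : (τp - x₀) ^ (α + 2) = (τp - x₀) ^ (α + 1) * (τp - x₀) := by
    rw [show α + 2 = (α + 1) + 1 by ring]
    exact rpow_succ_aux (by linarith) (by linarith)
  have hPnn : 0 ≤ (τp - x₀) ^ (α + 1) := Real.rpow_nonneg (by linarith) _
  by_cases hcase : (τm + τp) / 2 ≤ x₀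
  · -- middle point left of x₀
    have hI1 : (∫ t in τm..((τm + τp) / 2), ((τm + (τm + τp) / 2) / 2 - t) * g t) = 0 :=
      int_zero_aux α x₀ K₂ hα g hg hm hcase _
    have hsplit : (∫ t in ((τm + τp) / 2)..τp, (t - ((τm + τp) / 2 + τp) / 2) * g t)
        = (∫ t in ((τm + τp) / 2)..x₀, (t - ((τm + τp) / 2 + τp) / 2) * g t)
          + (∫ t in x₀..τp, (t - ((τm + τp) / 2 + τp) / 2) * g t) :=
      (intervalIntegral.integral_add_adjacent_intervals (hInt _ _ _) (hInt _ _ _)).symm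
    have hzero : (∫ t in ((τm + τp) / 2)..x₀, (t - ((τm + τp) / 2 + τp) / 2) * g t) = 0 :=
      int_zero_aux α x₀ K₂ hα g hg hcase le_rfl _
    have hval : (∫ t in x₀..τp, (t - ((τm + τp) / 2 + τp) / 2) * g t)
        = K₂ * (((τp - x₀) ^ (α+1) * (τp - x₀) - 0) / (α + 2)
          - (((τm + τp) / 2 + τp) / 2 - x₀) * (((τp - x₀) ^ (α+1) - 0) / (α + 1))) := by
      rw [int_comp_aux α x₀ K₂ hα g hg le_rfl hp _, sub_self,
        Real.zero_rpow h2.ne', Real.zero_rpow h1.ne', hD2]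
    rw [hI1, hsplit, hzero, hval]
    exact finalA_aux α K₂ τm τp x₀ _ hα hK₂ hPnn hm hcase hp
  · push_neg at hcase
    have hcase' : x₀ ≤ (τm + τp) / 2 := hcase.le
    have hdpos : 0 < τp - x₀ := by linarith
    have hT : 0 ≤ (τm + τp) / 2 - x₀ := by linarith
    have hQ2 : ((τm + τp) / 2 - x₀) ^ (α + 2)
        = ((τm + τp) / 2 - x₀) ^ (α + 1) * ((τm + τp) / 2 - x₀) := by
      rw [show α + 2 = (α + 1) + 1 by ring]
      exact rpow_succ_aux hT (by linarith)
    have hsplit : (∫ t in τm..((τm + τp) / 2), ((τm + (τm + τp) / 2) / 2 - t) * g t)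
        = (∫ t in τm..x₀, ((τm + (τm + τp) / 2) / 2 - t) * g t)
          + (∫ t in x₀..((τm + τp) / 2), ((τm + (τm + τp) / 2) / 2 - t) * g t) := by
      refine (intervalIntegral.integral_add_adjacent_intervals ?_ ?_).symm <;>
        exact ((continuous_const.sub continuous_id).mul hgc).intervalIntegrable _ _
    have hzero : (∫ t in τm..x₀, ((τm + (τm + τp) / 2) / 2 - t) * g t) = 0 :=
      int_zero_aux α x₀ K₂ hα g hg hm le_rfl _
    have hval1 : (∫ t in x₀..((τm + τp) / 2), ((τm + (τm + τp) / 2) / 2 - t) * g t)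
        = -(K₂ * ((((τm + τp) / 2 - x₀) ^ (α+1) * ((τm + τp) / 2 - x₀) - 0) / (α + 2)
          - ((τm + (τm + τp) / 2) / 2 - x₀) * ((((τm + τp) / 2 - x₀) ^ (α+1) - 0) / (α + 1)))) := by
      rw [show (fun t => ((τm + (τm + τp) / 2) / 2 - t) * g t)
          = fun t => -((t - (τm + (τm + τp) / 2) / 2) * g t) from funext fun t => by ring,
        intervalIntegral.integral_neg,
        int_comp_aux α x₀ K₂ hα g hg le_rfl hcase' _, sub_self,
        Real.zero_rpow h2.ne', Real.zero_rpow h1.ne', hQ2]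
    have hval2 : (∫ t in ((τm + τp) / 2)..τp, (t - ((τm + τp) / 2 + τp) / 2) * g t)
        = K₂ * (((τp - x₀) ^ (α+1) * (τp - x₀)
            - ((τm + τp) / 2 - x₀) ^ (α+1) * ((τm + τp) / 2 - x₀)) / (α + 2)
          - (((τm + τp) / 2 + τp) / 2 - x₀) * (((τp - x₀) ^ (α+1)
            - ((τm + τp) / 2 - x₀) ^ (α+1)) / (α + 1))) := by
      rw [int_comp_aux α x₀ K₂ hα g hg hcase' (by linarith) _, hD2, hQ2]
    rw [hsplit, hzero, hval1, hval2]
    have hbern := bern_aux α (τp - x₀) ((τm + τp) / 2 - x₀)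
      ((τp - x₀) ^ (α+1)) (((τm + τp) / 2 - x₀) ^ (α+1)) ((2:ℝ)^(α+2))
      hα hdpos hT (by linarith) rfl rfl rfl
    refine finalB_aux α K₂ τm τp x₀ ((τp - x₀) ^ (α+1)) (((τm + τp) / 2 - x₀) ^ (α+1))
      ((2:ℝ)^(α+2)) hα hK₂ hPnn (Real.rpow_pos_of_pos (by norm_num) _)
      (mu1_aux α) (mu2_aux α) (by linarith [hbern]) hm hp
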